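/- For the exponential family of stochastic matrices with A(θ) = log ρ(θ) and Kullback–Leibler divergence rate KL(θ₁‖θ₂) = Σ_{x,y} π_{θ₁}(x)P_{θ₁}(x,y) log(P_{θ₁}(x,y)/P_{θ₂}(x,y)), one has for all real θ₁, θ₂: KL(θ₁‖θ₂) = θ₁Ȧ(θ₁) − A(θ₁) − (θ₂Ȧ(θ₁) − A(θ₂)) = A(θ₂) − A(θ₁) − (θ₂ − θ₁)Ȧ(θ₁). -/

import Mathlib

/-- For the exponential family of stochastic matrices, the KL divergence rate
between parameters `θ₁` and `θ₂` equals the Bregman divergence of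
`A θ = log ρ θ`:
`KL(θ₁‖θ₂) = θ₁ Ȧ(θ₁) − A(θ₁) − (θ₂ Ȧ(θ₁) − A(θ₂)) = A(θ₂) − A(θ₁) − (θ₂−θ₁) Ȧ(θ₁)`. -/
theorem stmt_13
    {S : Type*} [Fintype S] [DecidableEq S]
    (P : S → S → ℝ) (f : S → ℝ)
    (hP0 : ∀ x y, 0 ≤ P x y) (hP1 : ∀ x, ∑ y, P x y = 1)
    (hirr : ∀ x y : S, ∃ n : ℕ, 0 < ((Matrix.of P) ^ n) x y)
    (ρ : ℝ → ℝ) (v : ℝ → S → ℝ)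
    (hρ : ∀ θ, 0 < ρ θ) (hv : ∀ θ x, 0 < v θ x)
    (heig : ∀ θ x, ∑ y, P x y * Real.exp (θ * f y) * v θ y = ρ θ * v θ x)
    (hρd : Differentiable ℝ ρ)
    (hvd : ∀ x, Differentiable ℝ fun θ => v θ x)
    (pi : ℝ → S → ℝ)
    (hpi0 : ∀ θ x, 0 ≤ pi θ x) (hpi1 : ∀ θ, ∑ x, pi θ x = 1)
    (hpistat : ∀ θ y,
      ∑ x, pi θ x * (P x y * Real.exp (θ * f y) * v θ y / (ρ θ * v θ x)) = pi θ y)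
    (θ₁ θ₂ : ℝ) :
    (∑ x, ∑ y, pi θ₁ x * (P x y * Real.exp (θ₁ * f y) * v θ₁ y / (ρ θ₁ * v θ₁ x))
        * Real.log ((P x y * Real.exp (θ₁ * f y) * v θ₁ y / (ρ θ₁ * v θ₁ x))
            / (P x y * Real.exp (θ₂ * f y) * v θ₂ y / (ρ θ₂ * v θ₂ x))))
      = θ₁ * deriv (fun t => Real.log (ρ t)) θ₁ - Real.log (ρ θ₁)
          - (θ₂ * deriv (fun t => Real.log (ρ t)) θ₁ - Real.log (ρ θ₂)) ∧
    (∑ x, ∑ y, pi θ₁ x * (P x y * Real.exp (θ₁ * f y) * v θ₁ y / (ρ θ₁ * v θ₁ x))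
        * Real.log ((P x y * Real.exp (θ₁ * f y) * v θ₁ y / (ρ θ₁ * v θ₁ x))
            / (P x y * Real.exp (θ₂ * f y) * v θ₂ y / (ρ θ₂ * v θ₂ x))))
      = Real.log (ρ θ₂) - Real.log (ρ θ₁)
          - (θ₂ - θ₁) * deriv (fun t => Real.log (ρ t)) θ₁ := by
  have hρ1 : ρ θ₁ ≠ 0 := (hρ θ₁).ne'
  have hρ2 : ρ θ₂ ≠ 0 := (hρ θ₂).ne'
  have hv1 : ∀ x, v θ₁ x ≠ 0 := fun x => (hv θ₁ x).ne'
  have hv2 : ∀ x, v θ₂ x ≠ 0 := fun x => (hv θ₂ x).ne'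
  have hderivlog : deriv (fun t => Real.log (ρ t)) θ₁ = deriv ρ θ₁ / ρ θ₁ :=
    (((hρd θ₁).hasDerivAt).log hρ1).deriv
  -- derivative of eigen equation
  have hdiff : ∀ x, ∑ y, P x y * Real.exp (θ₁ * f y)
        * (f y * v θ₁ y + deriv (fun θ => v θ y) θ₁)
      = deriv ρ θ₁ * v θ₁ x + ρ θ₁ * deriv (fun θ => v θ x) θ₁ := by
    intro x
    have hL : HasDerivAt (fun θ => ∑ y, P x y * Real.exp (θ * f y) * v θ y)
        (∑ y, P x y * Real.exp (θ₁ * f y)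
          * (f y * v θ₁ y + deriv (fun θ => v θ y) θ₁)) θ₁ := by
      apply HasDerivAt.fun_sum
      intro y _
      have h1 : HasDerivAt (fun θ : ℝ => P x y * Real.exp (θ * f y))
          (P x y * (Real.exp (θ₁ * f y) * (1 * f y))) θ₁ :=
        (((hasDerivAt_id θ₁).mul_const (f y)).exp).const_mul (P x y)
      have h2 := h1.fun_mul ((hvd y) θ₁).hasDerivAt
      refine h2.congr_deriv ?_
      ring
    have hR : HasDerivAt (fun θ => ∑ y, P x y * Real.exp (θ * f y) * v θ y)
        (deriv ρ θ₁ * v θ₁ x + ρ θ₁ * deriv (fun θ => v θ x) θ₁) θ₁ := by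
      have heq : (fun θ => ∑ y, P x y * Real.exp (θ * f y) * v θ y)
          = fun θ => ρ θ * v θ x := funext fun θ => heig θ x
      rw [heq]
      exact ((hρd θ₁).hasDerivAt).mul ((hvd x) θ₁).hasDerivAt
    exact hL.unique hR
  -- row sums of P_{θ₁}
  have hrow : ∀ x, ∑ y, P x y * Real.exp (θ₁ * f y) * v θ₁ y / (ρ θ₁ * v θ₁ x) = 1 := by
    intro x
    rw [← Finset.sum_div, heig θ₁ x]
    exact div_self (mul_ne_zero hρ1 (hv1 x))
  -- transfer lemmas
  have hsumy : ∀ g : S → ℝ, ∑ x, ∑ y, pi θ₁ x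
        * (P x y * Real.exp (θ₁ * f y) * v θ₁ y / (ρ θ₁ * v θ₁ x)) * g y
      = ∑ y, pi θ₁ y * g y := by
    intro g
    rw [Finset.sum_comm]
    refine Finset.sum_congr rfl fun y _ => ?_
    rw [← hpistat θ₁ y, Finset.sum_mul]
  have hsumx : ∀ g : S → ℝ, ∑ x, ∑ y, pi θ₁ x
        * (P x y * Real.exp (θ₁ * f y) * v θ₁ y / (ρ θ₁ * v θ₁ x)) * g x
      = ∑ x, pi θ₁ x * g x := by
    intro g
    refine Finset.sum_congr rfl fun x _ => ?_
    have : ∑ y, pi θ₁ x * (P x y * Real.exp (θ₁ * f y) * v θ₁ y / (ρ θ₁ * v θ₁ x)) * g x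
        = (pi θ₁ x * g x) * ∑ y, P x y * Real.exp (θ₁ * f y) * v θ₁ y / (ρ θ₁ * v θ₁ x) := by
      rw [Finset.mul_sum]
      exact Finset.sum_congr rfl fun y _ => by ring
    rw [this, hrow x, mul_one]
  -- pointwise log decomposition
  have hlog : ∀ x y, pi θ₁ x * (P x y * Real.exp (θ₁ * f y) * v θ₁ y / (ρ θ₁ * v θ₁ x))
        * Real.log ((P x y * Real.exp (θ₁ * f y) * v θ₁ y / (ρ θ₁ * v θ₁ x))
            / (P x y * Real.exp (θ₂ * f y) * v θ₂ y / (ρ θ₂ * v θ₂ x)))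
      = pi θ₁ x * (P x y * Real.exp (θ₁ * f y) * v θ₁ y / (ρ θ₁ * v θ₁ x))
        * ((θ₁ - θ₂) * f y + (Real.log (v θ₁ y) - Real.log (v θ₂ y))
            + (Real.log (ρ θ₂) - Real.log (ρ θ₁)))
        - pi θ₁ x * (P x y * Real.exp (θ₁ * f y) * v θ₁ y / (ρ θ₁ * v θ₁ x))
        * (Real.log (v θ₁ x) - Real.log (v θ₂ x)) := by
    intro x y
    rcases eq_or_lt_of_le (hP0 x y) with h | h
    · rw [← h]; simp
    · have hPne : P x y ≠ 0 := h.ne'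
      have hratio : (P x y * Real.exp (θ₁ * f y) * v θ₁ y / (ρ θ₁ * v θ₁ x))
            / (P x y * Real.exp (θ₂ * f y) * v θ₂ y / (ρ θ₂ * v θ₂ x))
          = Real.exp ((θ₁ - θ₂) * f y) * ((v θ₁ y / v θ₂ y)
              * ((ρ θ₂ * v θ₂ x) / (ρ θ₁ * v θ₁ x))) := by
        have hexp : Real.exp (θ₁ * f y)
            = Real.exp ((θ₁ - θ₂) * f y) * Real.exp (θ₂ * f y) := by
          rw [← Real.exp_add]; ring_nf
        rw [hexp]
        field_simp [hPne, hρ1, hρ2, hv1 x, hv1 y, hv2 x, hv2 y]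
      rw [hratio]
      rw [Real.log_mul (Real.exp_ne_zero _)
          (mul_ne_zero (div_ne_zero (hv1 y) (hv2 y))
            (div_ne_zero (mul_ne_zero hρ2 (hv2 x)) (mul_ne_zero hρ1 (hv1 x)))),
        Real.log_exp,
        Real.log_mul (div_ne_zero (hv1 y) (hv2 y))
          (div_ne_zero (mul_ne_zero hρ2 (hv2 x)) (mul_ne_zero hρ1 (hv1 x))),
        Real.log_div (hv1 y) (hv2 y),
        Real.log_div (mul_ne_zero hρ2 (hv2 x)) (mul_ne_zero hρ1 (hv1 x)),
        Real.log_mul hρ2 (hv2 x), Real.log_mul hρ1 (hv1 x)]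
      ring
  -- main reduction of the KL sum
  have key : (∑ x, ∑ y, pi θ₁ x * (P x y * Real.exp (θ₁ * f y) * v θ₁ y / (ρ θ₁ * v θ₁ x))
        * Real.log ((P x y * Real.exp (θ₁ * f y) * v θ₁ y / (ρ θ₁ * v θ₁ x))
            / (P x y * Real.exp (θ₂ * f y) * v θ₂ y / (ρ θ₂ * v θ₂ x))))
      = (θ₁ - θ₂) * (∑ y, pi θ₁ y * f y) + (Real.log (ρ θ₂) - Real.log (ρ θ₁)) := by
    have h1 : (∑ x, ∑ y, pi θ₁ x * (P x y * Real.exp (θ₁ * f y) * v θ₁ y / (ρ θ₁ * v θ₁ x))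
          * Real.log ((P x y * Real.exp (θ₁ * f y) * v θ₁ y / (ρ θ₁ * v θ₁ x))
              / (P x y * Real.exp (θ₂ * f y) * v θ₂ y / (ρ θ₂ * v θ₂ x))))
        = (∑ x, ∑ y, pi θ₁ x * (P x y * Real.exp (θ₁ * f y) * v θ₁ y / (ρ θ₁ * v θ₁ x))
            * ((θ₁ - θ₂) * f y + (Real.log (v θ₁ y) - Real.log (v θ₂ y))
                + (Real.log (ρ θ₂) - Real.log (ρ θ₁))))
          - (∑ x, ∑ y, pi θ₁ x * (P x y * Real.exp (θ₁ * f y) * v θ₁ y / (ρ θ₁ * v θ₁ x))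
            * (Real.log (v θ₁ x) - Real.log (v θ₂ x))) := by
      rw [← Finset.sum_sub_distrib]
      refine Finset.sum_congr rfl fun x _ => ?_
      rw [← Finset.sum_sub_distrib]
      exact Finset.sum_congr rfl fun y _ => hlog x y
    rw [h1,
      hsumy (fun y => (θ₁ - θ₂) * f y + (Real.log (v θ₁ y) - Real.log (v θ₂ y))
        + (Real.log (ρ θ₂) - Real.log (ρ θ₁))),
      hsumx (fun x => Real.log (v θ₁ x) - Real.log (v θ₂ x)),
      ← Finset.sum_sub_distrib]
    have h2 : ∀ y : S, pi θ₁ y * ((θ₁ - θ₂) * f y + (Real.log (v θ₁ y) - Real.log (v θ₂ y))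
          + (Real.log (ρ θ₂) - Real.log (ρ θ₁)))
        - pi θ₁ y * (Real.log (v θ₁ y) - Real.log (v θ₂ y))
        = (θ₁ - θ₂) * (pi θ₁ y * f y)
          + (Real.log (ρ θ₂) - Real.log (ρ θ₁)) * pi θ₁ y := fun y => by ring
    rw [Finset.sum_congr rfl fun y _ => h2 y, Finset.sum_add_distrib,
      ← Finset.mul_sum, ← Finset.mul_sum, hpi1 θ₁, mul_one]
  -- identification of Ȧ(θ₁)
  have hA : ∑ y, pi θ₁ y * f y = deriv ρ θ₁ / ρ θ₁ := by
    have hx : ∀ x, ∑ y, pi θ₁ x * (P x y * Real.exp (θ₁ * f y) * v θ₁ y / (ρ θ₁ * v θ₁ x))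
          * (f y + deriv (fun θ => v θ y) θ₁ / v θ₁ y)
        = pi θ₁ x * (deriv ρ θ₁ / ρ θ₁)
          + pi θ₁ x * (deriv (fun θ => v θ x) θ₁ / v θ₁ x) := by
      intro x
      have e1 : ∑ y, pi θ₁ x * (P x y * Real.exp (θ₁ * f y) * v θ₁ y / (ρ θ₁ * v θ₁ x))
            * (f y + deriv (fun θ => v θ y) θ₁ / v θ₁ y)
          = (pi θ₁ x / (ρ θ₁ * v θ₁ x)) * ∑ y, P x y * Real.exp (θ₁ * f y)
              * (f y * v θ₁ y + deriv (fun θ => v θ y) θ₁) := by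
        rw [Finset.mul_sum]
        refine Finset.sum_congr rfl fun y _ => ?_
        field_simp [hρ1, hv1 x, hv1 y]
      rw [e1, hdiff x]
      field_simp [hρ1, hv1 x]
    have e2 : ∑ x, ∑ y, pi θ₁ x * (P x y * Real.exp (θ₁ * f y) * v θ₁ y / (ρ θ₁ * v θ₁ x))
          * (f y + deriv (fun θ => v θ y) θ₁ / v θ₁ y)
        = deriv ρ θ₁ / ρ θ₁ + ∑ x, pi θ₁ x * (deriv (fun θ => v θ x) θ₁ / v θ₁ x) := by
      rw [Finset.sum_congr rfl fun x _ => hx x, Finset.sum_add_distrib,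
        ← Finset.sum_mul, hpi1 θ₁, one_mul]
    rw [hsumy (fun y => f y + deriv (fun θ => v θ y) θ₁ / v θ₁ y)] at e2
    have e3 : ∑ y, pi θ₁ y * (f y + deriv (fun θ => v θ y) θ₁ / v θ₁ y)
        = ∑ y, pi θ₁ y * f y + ∑ y, pi θ₁ y * (deriv (fun θ => v θ y) θ₁ / v θ₁ y) := by
      rw [← Finset.sum_add_distrib]
      exact Finset.sum_congr rfl fun y _ => by ring
    rw [e3] at e2
    linarith
  rw [hderivlog] at *
  constructor <;> rw [key, hA] <;> ring
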